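/- Let g be a finite-dimensional complex Lie algebra, k an ideal of g with a direct complement g' (so g = k ⊕ g' as Lie algebras), and M a simple g-module with locally finite k-action. Write M ≅ M_k ⊗ M' where M_k is a simple finite-dimensional k-module and M' = Hom_k(M_k, M). Then M' is a simple g'-module. -/

import Mathlib

open TensorProduct

set_option maxRecDepth 8000

/-- Let `g` be a finite-dimensional complex Lie algebra which is a direct sum of two
ideals `k` and `g'`, and let `M` be a simple `g`-module with locally finite `k`-action.
Write `M ≅ Mk ⊗ M'` where `Mk` is a simple finite-dimensional `k`-submodule of `M` and
`M' = Hom_k(Mk, M)` (expressed by the hypothesis that the evaluation map is bijective).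
Then `M'` is a simple `g'`-module, where `y ∈ g'` acts on `φ ∈ M'` by
`(y · φ) m = ⁅y, φ m⁆`: it is nontrivial, and any subspace invariant under this
action is `⊥` or `⊤`. -/
theorem hom_space_is_simple_over_complement
    (L : Type*) [LieRing L] [LieAlgebra ℂ L] [FiniteDimensional ℂ L]
    (k g' : LieIdeal ℂ L) (hsup : k ⊔ g' = ⊤) (hinf : k ⊓ g' = ⊥)
    (M : Type*) [AddCommGroup M] [Module ℂ M] [LieRingModule L M] [LieModule ℂ L M]
    [LieModule.IsIrreducible ℂ L M]
    (hlf : ∀ m : M, FiniteDimensional ℂ (LieSubmodule.lieSpan ℂ (↥k) {m}))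
    (Mk : LieSubmodule ℂ (↥k) M) [LieModule.IsIrreducible ℂ (↥k) (↥Mk)]
    [FiniteDimensional ℂ (↥Mk)]
    (hev : Function.Bijective
      (TensorProduct.lift
        (LinearMap.mk₂ ℂ (fun (m : ↥Mk) (φ : (↥Mk) →ₗ⁅ℂ,↥k⁆ M) => φ m)
          (fun m₁ m₂ φ => φ.map_add m₁ m₂)
          (fun c m φ => φ.map_smul c m)
          (fun m φ₁ φ₂ => rfl)
          (fun c m φ => rfl)))) :
    Nontrivial ((↥Mk) →ₗ⁅ℂ,↥k⁆ M) ∧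
    ∀ S : Submodule ℂ ((↥Mk) →ₗ⁅ℂ,↥k⁆ M),
      (∀ y : L, y ∈ g' → ∀ φ ∈ S, ∀ ψ : (↥Mk) →ₗ⁅ℂ,↥k⁆ M,
        (∀ m : ↥Mk, ψ m = ⁅y, φ m⁆) → ψ ∈ S) →
      S = ⊥ ∨ S = ⊤ := by
  set E := (TensorProduct.lift
        (LinearMap.mk₂ ℂ (fun (m : ↥Mk) (φ : (↥Mk) →ₗ⁅ℂ,↥k⁆ M) => φ m)
          (fun m₁ m₂ φ => φ.map_add m₁ m₂)
          (fun c m φ => φ.map_smul c m)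
          (fun m φ₁ φ₂ => rfl)
          (fun c m φ => rfl))) with hE
  have hEtmul : ∀ (m : ↥Mk) (φ : (↥Mk) →ₗ⁅ℂ,↥k⁆ M), E (m ⊗ₜ φ) = φ m := by
    intro m φ; rw [hE]; simp
  have hMkn : Nontrivial (↥Mk) := LieModule.nontrivial_of_isIrreducible ℂ (↥k) (↥Mk)
  obtain ⟨m₀, hm₀⟩ := exists_ne (0 : ↥Mk)
  -- commuting of k and g' on M
  have hcomm : ∀ (x : ↥k) (y : L), y ∈ g' → ∀ m : M,
      ⁅(x : L), ⁅y, m⁆⁆ = ⁅y, ⁅(x : L), m⁆⁆ := by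
    intro x y hy m
    have h1 : ⁅(x : L), y⁆ ∈ k ⊓ g' := by
      refine ⟨?_, g'.lie_mem hy⟩
      have h2 : ⁅-y, (x : L)⁆ ∈ k := k.lie_mem x.2
      rwa [neg_lie, lie_skew] at h2
    rw [hinf] at h1
    have h0 : ⁅(x : L), y⁆ = 0 := (LieSubmodule.mem_bot _).mp h1
    have h3 := lie_lie (x : L) y m
    rw [h0, zero_lie] at h3
    exact sub_eq_zero.mp h3.symm
  constructor
  · refine ⟨Mk.incl, 0, fun h => hm₀ ?_⟩
    have h1 : Mk.incl m₀ = (0 : (↥Mk) →ₗ⁅ℂ,↥k⁆ M) m₀ := by rw [h]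
    rw [LieSubmodule.incl_apply, LieModuleHom.zero_apply] at h1
    exact ZeroMemClass.coe_eq_zero.mp h1
  · intro S hS
    -- ψ construction
    have hψ : ∀ (y : L), y ∈ g' → ∀ φ : (↥Mk) →ₗ⁅ℂ,↥k⁆ M,
        ∃ ψ : (↥Mk) →ₗ⁅ℂ,↥k⁆ M, ∀ m : ↥Mk, ψ m = ⁅y, φ m⁆ := by
      intro y hy φ
      refine ⟨{ toFun := fun m => ⁅y, φ m⁆
                map_add' := fun a b => by
                  show ⁅y, φ (a + b)⁆ = ⁅y, φ a⁆ + ⁅y, φ b⁆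
                  rw [map_add φ, lie_add]
                map_smul' := fun c a => by
                  show ⁅y, φ (c • a)⁆ = c • ⁅y, φ a⁆
                  rw [map_smul φ, lie_smul]
                map_lie' := by
                  intro x m
                  show ⁅y, φ ⁅x, m⁆⁆ = ⁅x, ⁅y, φ m⁆⁆
                  rw [φ.map_lie, LieIdeal.coe_bracket_of_module,
                    LieIdeal.coe_bracket_of_module, hcomm x y hy] }, fun m => rfl⟩
    set gen : Set M := {n | ∃ φ ∈ S, ∃ m : ↥Mk, φ m = n} with hgen
    set N₀ : Submodule ℂ M := Submodule.span ℂ gen with hN₀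
    have hNlie : ∀ (x : L), ∀ n ∈ N₀, ⁅x, n⁆ ∈ N₀ := by
      intro x n hn
      have hx : x ∈ k ⊔ g' := by rw [hsup]; trivial
      obtain ⟨a, ha, b, hb, hab⟩ := (LieSubmodule.mem_sup _ _ _).mp hx
      have key : ∀ z : L, (z ∈ k ∨ z ∈ g') → ∀ n ∈ N₀, ⁅z, n⁆ ∈ N₀ := by
        intro z hz n hn
        have : N₀ ≤ Submodule.comap (LieModule.toEnd ℂ L M z) N₀ := by
          rw [hN₀, Submodule.span_le]
          rintro _ ⟨φ, hφ, m, rfl⟩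
          simp only [SetLike.mem_coe, Submodule.mem_comap, LieModule.toEnd_apply_apply]
          rcases hz with hz | hz
          · have : ⁅z, φ m⁆ = φ ⁅(⟨z, hz⟩ : ↥k), m⁆ := by
              rw [φ.map_lie, LieIdeal.coe_bracket_of_module]
            rw [this]
            exact Submodule.subset_span ⟨φ, hφ, _, rfl⟩
          · obtain ⟨ψ, hψ'⟩ := hψ z hz φ
            rw [← hψ' m]
            exact Submodule.subset_span ⟨ψ, hS z hz φ hφ ψ hψ', m, rfl⟩
        simpa using this hn
      rw [← hab, add_lie]
      exact N₀.add_mem (key a (Or.inl ha) n hn) (key b (Or.inr hb) n hn)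
    set N : LieSubmodule ℂ L M := { N₀ with lie_mem := fun {x n} hn => hNlie x n hn } with hN
    rcases eq_bot_or_eq_top N with hbot | htop
    · left
      ext φ
      simp only [Submodule.mem_bot]
      constructor
      · intro hφ
        ext m
        have : (φ m : M) ∈ N₀ := Submodule.subset_span ⟨φ, hφ, m, rfl⟩
        have h2 : (φ m : M) ∈ N := this
        rw [hbot] at h2
        simpa using h2
      · rintro rfl; exact S.zero_mem
    · right
      have hNtop : N₀ = ⊤ := by
        have := congrArg (fun (X : LieSubmodule ℂ L M) => (X : Submodule ℂ M)) htop
        simpa [hN] using this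
      -- tensor preimage
      set T : Submodule ℂ ((↥Mk) ⊗[ℂ] ((↥Mk) →ₗ⁅ℂ,↥k⁆ M)) :=
        Submodule.span ℂ {t | ∃ φ ∈ S, ∃ m : ↥Mk, m ⊗ₜ φ = t} with hT
      have hTmap : T.map E = N₀ := by
        rw [hT, hN₀, Submodule.map_span]
        congr 1
        ext n
        constructor
        · rintro ⟨t, ⟨φ, hφ, m, rfl⟩, rfl⟩
          exact ⟨φ, hφ, m, (hEtmul m φ).symm⟩
        · rintro ⟨φ, hφ, m, rfl⟩
          exact ⟨m ⊗ₜ φ, ⟨φ, hφ, m, rfl⟩, hEtmul m φ⟩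
      have hTtop : T = ⊤ := by
        rw [eq_top_iff]
        intro t _
        have : E t ∈ T.map E := by rw [hTmap, hNtop]; trivial
        obtain ⟨t', ht', heq⟩ := this
        rwa [← hev.1 heq]
      ext ψ
      simp only [Submodule.mem_top, iff_true]
      obtain ⟨f, hf⟩ : ∃ f : Module.Dual ℂ (↥Mk), f m₀ = 1 := by
        have h : ¬ ∀ f : Module.Dual ℂ (↥Mk), f m₀ = 0 := by
          rw [Module.forall_dual_apply_eq_zero_iff]; exact hm₀
        push_neg at h
        obtain ⟨f, hf0⟩ := h
        exact ⟨(f m₀)⁻¹ • f, by simp [inv_mul_cancel₀ hf0]⟩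
      set G : ((↥Mk) ⊗[ℂ] ((↥Mk) →ₗ⁅ℂ,↥k⁆ M)) →ₗ[ℂ] ((↥Mk) →ₗ⁅ℂ,↥k⁆ M) :=
        (TensorProduct.lid ℂ _).toLinearMap ∘ₗ TensorProduct.map f LinearMap.id with hG
      have hGtmul : ∀ (m : ↥Mk) (φ : (↥Mk) →ₗ⁅ℂ,↥k⁆ M), G (m ⊗ₜ φ) = f m • φ := by
        intro m φ; simp [hG]
      have hGT : ∀ t ∈ T, G t ∈ S := by
        intro t ht
        rw [hT] at ht
        induction ht using Submodule.span_induction with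
        | mem t ht => obtain ⟨φ, hφ, m, rfl⟩ := ht; rw [hGtmul]; exact S.smul_mem _ hφ
        | zero => simp
        | add a b _ _ ha hb => rw [map_add]; exact S.add_mem ha hb
        | smul c a _ ha => rw [map_smul]; exact S.smul_mem _ ha
      have : G (m₀ ⊗ₜ ψ) ∈ S := hGT _ (by rw [hTtop]; trivial)
      rwa [hGtmul, hf, one_smul] at this
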